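/- arXiv:2105.11971 — 6 statements merged into one kernel-verified Lean document; each statement's English description precedes it below -/
import Mathlib

section
/- Let K be a field with algebraic closure K̄, and let f, g ∈ K[X] be polynomials each of positive degree. Then the resultant Res(f, g) (the determinant of the Sylvester matrix of f and g) equals 0 if and only if f and g have a common root in K̄. -/
open Polynomial


-- generic row lemma
lemma row_sum {K : Type*} [Field K] (p : Polynomial K) (n s : ℕ) (hs : s + p.natDegree < n) :
    ∑ j : Fin n, C (if s ≤ (j : ℕ) ∧ (j : ℕ) ≤ s + p.natDegree
        then p.coeff (p.natDegree + s - j) else 0) * X ^ (n - 1 - (j : ℕ))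
      = X ^ (n - 1 - s - p.natDegree) * p := by
  set d := p.natDegree with hd
  conv_rhs => rw [p.as_sum_range' (d + 1) (by omega)]
  rw [Finset.mul_sum]
  rw [Fin.sum_univ_eq_sum_range (fun j =>
    C (if s ≤ j ∧ j ≤ s + d then p.coeff (d + s - j) else 0) * X ^ (n - 1 - j)) n]
  simp only [apply_ite C, map_zero, ite_mul, zero_mul]
  rw [← Finset.sum_filter]
  apply Finset.sum_bij' (i := fun j _ => d + s - j) (j := fun k _ => d + s - k)
  · intro j hj
    simp only [Finset.mem_filter, Finset.mem_range] at hj ⊢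
    omega
  · intro k hk
    simp only [Finset.mem_filter, Finset.mem_range] at hk ⊢
    omega
  · intro j hj
    simp only [Finset.mem_filter, Finset.mem_range] at hj
    omega
  · intro k hk
    simp only [Finset.mem_range] at hk
    omega
  · intro j hj
    simp only [Finset.mem_filter, Finset.mem_range] at hj
    rw [← C_mul_X_pow_eq_monomial]
    have h1 : d + s - (d + s - j) = j := by omega
    have h2 : n - 1 - j = (n - 1 - s - d) + (d + s - j) := by omega
    rw [h2, pow_add]
    ring



/-- The Sylvester matrix of two polynomials `f` and `g` over a commutative ring:
a `(natDegree f + natDegree g) × (natDegree f + natDegree g)` matrix, whose first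
`natDegree g` rows carry the shifted coefficient sequences of `f` (from the leading
coefficient down), and whose remaining `natDegree f` rows carry the shifted
coefficient sequences of `g`. -/
noncomputable def sylvesterMatrix {R : Type*} [CommRing R] (f g : Polynomial R) :
    Matrix (Fin (f.natDegree + g.natDegree)) (Fin (f.natDegree + g.natDegree)) R :=
  Matrix.of fun i j =>
    if (i : ℕ) < g.natDegree then
      if (i : ℕ) ≤ (j : ℕ) ∧ (j : ℕ) ≤ (i : ℕ) + f.natDegree then
        f.coeff (f.natDegree + i - j)
      else 0
    else
      if (i : ℕ) - g.natDegree ≤ (j : ℕ) ∧ (j : ℕ) ≤ ((i : ℕ) - g.natDegree) + g.natDegree then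
        g.coeff (g.natDegree + ((i : ℕ) - g.natDegree) - j)
      else 0

/-- The resultant of two polynomials: the determinant of their Sylvester matrix. -/
noncomputable def resultant {R : Type*} [CommRing R] (f g : Polynomial R) : R :=
  (sylvesterMatrix f g).det


lemma key {K : Type*} [Field K] (f g : Polynomial K) (hf : 0 < f.natDegree)
    (hg : 0 < g.natDegree) (v : Fin (f.natDegree + g.natDegree) → K) :
    ∑ j : Fin (f.natDegree + g.natDegree),
        C ((Matrix.vecMul v (sylvesterMatrix f g)) j) * X ^ (f.natDegree + g.natDegree - 1 - (j : ℕ))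
      = (∑ i : Fin (f.natDegree + g.natDegree),
          if (i : ℕ) < g.natDegree then C (v i) * X ^ (g.natDegree - 1 - (i : ℕ)) else 0) * f
        + (∑ i : Fin (f.natDegree + g.natDegree),
          if (i : ℕ) < g.natDegree then 0
          else C (v i) * X ^ (f.natDegree - 1 - ((i : ℕ) - g.natDegree))) * g := by
  set n := f.natDegree + g.natDegree with hn
  simp only [Matrix.vecMul, dotProduct, map_sum, Finset.sum_mul]
  rw [Finset.sum_comm]
  rw [← Finset.sum_add_distrib]
  apply Finset.sum_congr rfl
  intro i _
  simp only [map_mul, mul_assoc]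
  rw [← Finset.mul_sum]
  by_cases hi : (i : ℕ) < g.natDegree
  · rw [if_pos hi, if_pos hi, zero_mul, add_zero]
    have hrow : ∀ j : Fin n, sylvesterMatrix f g i j =
        (if (i : ℕ) ≤ (j : ℕ) ∧ (j : ℕ) ≤ (i : ℕ) + f.natDegree
          then f.coeff (f.natDegree + (i : ℕ) - (j : ℕ)) else 0) := by
      intro j; simp only [sylvesterMatrix, Matrix.of_apply, if_pos hi]
    simp only [hrow]
    rw [row_sum f n (i : ℕ) (by omega)]
    have he : n - 1 - (i : ℕ) - f.natDegree = g.natDegree - 1 - (i : ℕ) := by omega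
    rw [he, mul_assoc]
  · rw [if_neg hi, if_neg hi, zero_mul, zero_add]
    have hrow : ∀ j : Fin n, sylvesterMatrix f g i j =
        (if (i : ℕ) - g.natDegree ≤ (j : ℕ) ∧ (j : ℕ) ≤ ((i : ℕ) - g.natDegree) + g.natDegree
          then g.coeff (g.natDegree + ((i : ℕ) - g.natDegree) - (j : ℕ)) else 0) := by
      intro j; simp only [sylvesterMatrix, Matrix.of_apply, if_neg hi]
    simp only [hrow]
    rw [row_sum g n ((i : ℕ) - g.natDegree) (by omega)]
    have he : n - 1 - ((i : ℕ) - g.natDegree) - g.natDegree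
        = f.natDegree - 1 - ((i : ℕ) - g.natDegree) := by omega
    rw [he, mul_assoc]

lemma extract {K : Type*} [Semiring K] {n : ℕ} (w : Fin n → K) (j₀ : Fin n) :
    (∑ j : Fin n, C (w j) * X ^ (n - 1 - (j : ℕ))).coeff (n - 1 - (j₀ : ℕ)) = w j₀ := by
  rw [finset_sum_coeff, Finset.sum_eq_single j₀]
  · simp [coeff_C_mul, coeff_X_pow]
  · intro j _ hj
    rw [coeff_C_mul, coeff_X_pow, if_neg, mul_zero]
    have h1 := j.isLt; have h2 := j₀.isLt
    intro h; exact hj (Fin.ext (by omega))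
  · simp

lemma resultant_eq_zero_iff_exists {K : Type*} [Field K] (f g : Polynomial K)
    (hf : 0 < f.natDegree) (hg : 0 < g.natDegree) :
    _root_.resultant f g = 0 ↔ ∃ a b : Polynomial K, a ≠ 0 ∧ b ≠ 0 ∧ a.natDegree < g.natDegree ∧
      b.natDegree < f.natDegree ∧ a * f + b * g = 0 := by
  set n := f.natDegree + g.natDegree with hn
  have hf0 : f ≠ 0 := fun h => by simp [h] at hf
  have hg0 : g ≠ 0 := fun h => by simp [h] at hg
  constructor
  · intro hdet
    obtain ⟨v, hv, hvS⟩ := (Matrix.exists_vecMul_eq_zero_iff).2 hdet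
    set A : Polynomial K := ∑ i : Fin n,
      if (i : ℕ) < g.natDegree then C (v i) * X ^ (g.natDegree - 1 - (i : ℕ)) else 0 with hA
    set B : Polynomial K := ∑ i : Fin n,
      if (i : ℕ) < g.natDegree then 0
      else C (v i) * X ^ (f.natDegree - 1 - ((i : ℕ) - g.natDegree)) with hB
    have hAB : A * f + B * g = 0 := by
      rw [← key f g hf hg v, ← Finset.sum_const_zero (s := (Finset.univ : Finset (Fin n)))]
      apply Finset.sum_congr rfl
      intro j _
      rw [hvS]
      simp
    have hcA : ∀ i : Fin n, (i : ℕ) < g.natDegree → A.coeff (g.natDegree - 1 - (i : ℕ)) = v i := by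
      intro i hi
      rw [hA, finset_sum_coeff, Finset.sum_eq_single i]
      · rw [if_pos hi, coeff_C_mul, coeff_X_pow, if_pos rfl, mul_one]
      · intro j _ hj
        split_ifs with h1
        · rw [coeff_C_mul, coeff_X_pow, if_neg, mul_zero]
          intro h; exact hj (Fin.ext (by omega))
        · simp
      · simp
    have hcB : ∀ i : Fin n, ¬ ((i : ℕ) < g.natDegree) →
        B.coeff (f.natDegree - 1 - ((i : ℕ) - g.natDegree)) = v i := by
      intro i hi
      have hilt := i.isLt
      rw [hB, finset_sum_coeff, Finset.sum_eq_single i]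
      · rw [if_neg hi, coeff_C_mul, coeff_X_pow, if_pos rfl, mul_one]
      · intro j _ hj
        have hjlt := j.isLt
        split_ifs with h1
        · simp
        · rw [coeff_C_mul, coeff_X_pow, if_neg, mul_zero]
          intro h; exact hj (Fin.ext (by omega))
      · simp
    have hA0 : A ≠ 0 := by
      intro hA0
      rw [hA0, zero_mul, zero_add] at hAB
      have hB0 : B = 0 := by
        rcases mul_eq_zero.1 hAB with h | h
        · exact h
        · exact absurd h hg0
      apply hv
      funext i
      by_cases hi : (i : ℕ) < g.natDegree
      · rw [← hcA i hi, hA0, coeff_zero]; rfl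
      · rw [← hcB i hi, hB0, coeff_zero]; rfl
    have hB0 : B ≠ 0 := by
      intro hB0
      rw [hB0, zero_mul, add_zero] at hAB
      rcases mul_eq_zero.1 hAB with h | h
      · exact hA0 h
      · exact hf0 h
    refine ⟨A, B, hA0, hB0, ?_, ?_, hAB⟩
    · have hdeg : A.degree ≤ ((g.natDegree - 1 : ℕ) : WithBot ℕ) := by
        rw [hA]
        refine le_trans (degree_sum_le _ _) (Finset.sup_le fun i _ => ?_)
        split_ifs with hi
        · exact le_trans (degree_C_mul_X_pow_le _ _) (Nat.cast_le.mpr (by omega))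
        · simp
      have := natDegree_le_iff_degree_le.mpr hdeg
      omega
    · have hdeg : B.degree ≤ ((f.natDegree - 1 : ℕ) : WithBot ℕ) := by
        rw [hB]
        refine le_trans (degree_sum_le _ _) (Finset.sup_le fun i _ => ?_)
        split_ifs with hi
        · simp
        · exact le_trans (degree_C_mul_X_pow_le _ _) (Nat.cast_le.mpr (by omega))
      have := natDegree_le_iff_degree_le.mpr hdeg
      omega
  · rintro ⟨a, b, ha, hb, hda, hdb, hab⟩
    rw [_root_.resultant, ← Matrix.exists_vecMul_eq_zero_iff]
    refine ⟨fun i => if (i : ℕ) < g.natDegree then a.coeff (g.natDegree - 1 - (i : ℕ))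
      else b.coeff (f.natDegree - 1 - ((i : ℕ) - g.natDegree)), ?_, ?_⟩
    · intro hv0
      have hm : a.coeff a.natDegree ≠ 0 := by
        rw [← leadingCoeff]; exact leadingCoeff_ne_zero.mpr ha
      have hmlt : a.natDegree < g.natDegree := hda
      have h2 : (if (g.natDegree - 1 - a.natDegree) < g.natDegree
          then a.coeff (g.natDegree - 1 - (g.natDegree - 1 - a.natDegree))
          else b.coeff (f.natDegree - 1 - ((g.natDegree - 1 - a.natDegree) - g.natDegree)))
          = 0 := congrFun hv0 ⟨g.natDegree - 1 - a.natDegree, by omega⟩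
      rw [if_pos (by omega)] at h2
      have h3 : g.natDegree - 1 - (g.natDegree - 1 - a.natDegree) = a.natDegree := by omega
      rw [h3] at h2
      exact hm h2
    · -- v ᵥ* S = 0
      have hAa : (∑ i : Fin n, if (i : ℕ) < g.natDegree then
          C ((fun i : Fin n => if (i : ℕ) < g.natDegree then a.coeff (g.natDegree - 1 - (i : ℕ))
            else b.coeff (f.natDegree - 1 - ((i : ℕ) - g.natDegree))) i)
            * X ^ (g.natDegree - 1 - (i : ℕ)) else 0) = a := by
        have step1 : ∀ i : Fin n, (if (i : ℕ) < g.natDegree then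
            C ((fun i : Fin n => if (i : ℕ) < g.natDegree then a.coeff (g.natDegree - 1 - (i : ℕ))
              else b.coeff (f.natDegree - 1 - ((i : ℕ) - g.natDegree))) i)
              * X ^ (g.natDegree - 1 - (i : ℕ)) else 0)
            = (fun m : ℕ => if m < g.natDegree then
                C (a.coeff (g.natDegree - 1 - m)) * X ^ (g.natDegree - 1 - m) else 0) (i : ℕ) := by
          intro i
          by_cases hi : (i : ℕ) < g.natDegree
          · simp only [if_pos hi]
          · simp only [if_neg hi]
        rw [Finset.sum_congr rfl (fun i _ => step1 i),
          Fin.sum_univ_eq_sum_range (fun m : ℕ => if m < g.natDegree then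
            C (a.coeff (g.natDegree - 1 - m)) * X ^ (g.natDegree - 1 - m) else 0) n,
          ← Finset.sum_range_add_sum_Ico _ (show g.natDegree ≤ n by omega)]
        have hz : ∑ m ∈ Finset.Ico g.natDegree n, (if m < g.natDegree then
            C (a.coeff (g.natDegree - 1 - m)) * X ^ (g.natDegree - 1 - m) else 0) = 0 :=
          Finset.sum_eq_zero (fun m hm => by
            rw [Finset.mem_Ico] at hm; rw [if_neg (by omega)])
        rw [hz, add_zero]
        have hc : ∑ m ∈ Finset.range g.natDegree, (if m < g.natDegree then
            C (a.coeff (g.natDegree - 1 - m)) * X ^ (g.natDegree - 1 - m) else 0)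
            = ∑ m ∈ Finset.range g.natDegree,
              C (a.coeff (g.natDegree - 1 - m)) * X ^ (g.natDegree - 1 - m) :=
          Finset.sum_congr rfl (fun m hm => by
            rw [Finset.mem_range] at hm; rw [if_pos hm])
        rw [hc, Finset.sum_range_reflect (fun m => C (a.coeff m) * X ^ m) g.natDegree]
        conv_rhs => rw [a.as_sum_range' g.natDegree (by omega)]
        exact Finset.sum_congr rfl (fun m _ => C_mul_X_pow_eq_monomial)
      have hBb : (∑ i : Fin n, if (i : ℕ) < g.natDegree then 0 else
          C ((fun i : Fin n => if (i : ℕ) < g.natDegree then a.coeff (g.natDegree - 1 - (i : ℕ))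
            else b.coeff (f.natDegree - 1 - ((i : ℕ) - g.natDegree))) i)
            * X ^ (f.natDegree - 1 - ((i : ℕ) - g.natDegree))) = b := by
        have step1 : ∀ i : Fin n, (if (i : ℕ) < g.natDegree then 0 else
            C ((fun i : Fin n => if (i : ℕ) < g.natDegree then a.coeff (g.natDegree - 1 - (i : ℕ))
              else b.coeff (f.natDegree - 1 - ((i : ℕ) - g.natDegree))) i)
              * X ^ (f.natDegree - 1 - ((i : ℕ) - g.natDegree)))
            = (fun m : ℕ => if m < g.natDegree then 0 else
                C (b.coeff (f.natDegree - 1 - (m - g.natDegree)))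
                  * X ^ (f.natDegree - 1 - (m - g.natDegree))) (i : ℕ) := by
          intro i
          by_cases hi : (i : ℕ) < g.natDegree
          · simp only [if_pos hi]
          · simp only [if_neg hi]
        rw [Finset.sum_congr rfl (fun i _ => step1 i),
          Fin.sum_univ_eq_sum_range (fun m : ℕ => if m < g.natDegree then 0 else
            C (b.coeff (f.natDegree - 1 - (m - g.natDegree)))
              * X ^ (f.natDegree - 1 - (m - g.natDegree))) n,
          ← Finset.sum_range_add_sum_Ico _ (show g.natDegree ≤ n by omega)]
        have hz : ∑ m ∈ Finset.range g.natDegree, (if m < g.natDegree then 0 else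
            C (b.coeff (f.natDegree - 1 - (m - g.natDegree)))
              * X ^ (f.natDegree - 1 - (m - g.natDegree))) = 0 :=
          Finset.sum_eq_zero (fun m hm => by
            rw [Finset.mem_range] at hm; rw [if_pos hm])
        rw [hz, zero_add, Finset.sum_Ico_eq_sum_range]
        have hnn : n - g.natDegree = f.natDegree := by omega
        rw [hnn]
        have hc : ∑ m ∈ Finset.range f.natDegree, (if g.natDegree + m < g.natDegree then 0 else
            C (b.coeff (f.natDegree - 1 - (g.natDegree + m - g.natDegree)))
              * X ^ (f.natDegree - 1 - (g.natDegree + m - g.natDegree)))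
            = ∑ m ∈ Finset.range f.natDegree,
              C (b.coeff (f.natDegree - 1 - m)) * X ^ (f.natDegree - 1 - m) :=
          Finset.sum_congr rfl (fun m hm => by
            rw [if_neg (by omega)]
            have h4 : g.natDegree + m - g.natDegree = m := by omega
            rw [h4])
        rw [hc, Finset.sum_range_reflect (fun m => C (b.coeff m) * X ^ m) f.natDegree]
        conv_rhs => rw [b.as_sum_range' f.natDegree (by omega)]
        exact Finset.sum_congr rfl (fun m _ => C_mul_X_pow_eq_monomial)
      have h0 : ∑ j : Fin n, C ((Matrix.vecMul (fun i : Fin n =>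
          if (i : ℕ) < g.natDegree then a.coeff (g.natDegree - 1 - (i : ℕ))
          else b.coeff (f.natDegree - 1 - ((i : ℕ) - g.natDegree))) (sylvesterMatrix f g)) j)
            * X ^ (n - 1 - (j : ℕ)) = 0 := by
        rw [key f g hf hg _, hAa, hBb, hab]
      funext j
      have := extract (Matrix.vecMul (fun i : Fin n =>
        if (i : ℕ) < g.natDegree then a.coeff (g.natDegree - 1 - (i : ℕ))
        else b.coeff (f.natDegree - 1 - ((i : ℕ) - g.natDegree))) (sylvesterMatrix f g)) j
      rw [h0, coeff_zero] at this
      exact this.symm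

lemma exists_comb_iff_common_root {K : Type*} [Field K] (f g : Polynomial K)
    (hf : 0 < f.natDegree) (hg : 0 < g.natDegree) :
    (∃ a b : Polynomial K, a ≠ 0 ∧ b ≠ 0 ∧ a.natDegree < g.natDegree ∧
      b.natDegree < f.natDegree ∧ a * f + b * g = 0) ↔
      ∃ x : AlgebraicClosure K, aeval x f = 0 ∧ aeval x g = 0 := by
  classical
  have hf0 : f ≠ 0 := fun h => by simp [h] at hf
  have hg0 : g ≠ 0 := fun h => by simp [h] at hg
  have lemA : IsCoprime f g → ¬ ∃ x : AlgebraicClosure K, aeval x f = 0 ∧ aeval x g = 0 := by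
    rintro ⟨u, v, huv⟩ ⟨x, hxf, hxg⟩
    have := congrArg (aeval x) huv
    simp [hxf, hxg] at this
  have lemB : ¬ IsCoprime f g → ∃ x : AlgebraicClosure K, aeval x f = 0 ∧ aeval x g = 0 := by
    intro hnc
    set h := EuclideanDomain.gcd f g with hh
    have hh0 : h ≠ 0 := by
      intro h0
      exact hf0 (EuclideanDomain.gcd_eq_zero_iff.mp h0).1
    have hu : ¬ IsUnit h := fun u => hnc ((EuclideanDomain.gcd_isUnit_iff (x := f) (y := g)).mp u)
    have hdeg : 0 < h.degree := degree_pos_of_ne_zero_of_nonunit hh0 hu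
    have hmapdeg : (h.map (algebraMap K (AlgebraicClosure K))).degree = h.degree :=
      degree_map_eq_of_injective (algebraMap K (AlgebraicClosure K)).injective h
    obtain ⟨x, hx⟩ := IsAlgClosed.exists_root (h.map (algebraMap K (AlgebraicClosure K)))
      (by rw [hmapdeg]; exact fun e => by simp [e] at hdeg)
    have hxh : aeval x h = 0 := by
      rwa [aeval_def, eval₂_eq_eval_map, ← IsRoot.def]
    obtain ⟨f', hf'⟩ := EuclideanDomain.gcd_dvd_left f g
    obtain ⟨g', hg'⟩ := EuclideanDomain.gcd_dvd_right f g
    refine ⟨x, ?_, ?_⟩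
    · rw [hf', map_mul, ← hh, hxh, zero_mul]
    · rw [hg', map_mul, ← hh, hxh, zero_mul]
  have lemC : (∃ a b : Polynomial K, a ≠ 0 ∧ b ≠ 0 ∧ a.natDegree < g.natDegree ∧
      b.natDegree < f.natDegree ∧ a * f + b * g = 0) → ¬ IsCoprime f g := by
    rintro ⟨a, b, ha, hb, hda, hdb, hab⟩ hcop
    have hdvd : g ∣ a * f := by
      refine ⟨-b, ?_⟩
      linear_combination hab
    have : g ∣ a := (hcop.symm).dvd_of_dvd_mul_right hdvd
    have := natDegree_le_of_dvd this ha
    omega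
  have lemD : ¬ IsCoprime f g → (∃ a b : Polynomial K, a ≠ 0 ∧ b ≠ 0 ∧
      a.natDegree < g.natDegree ∧ b.natDegree < f.natDegree ∧ a * f + b * g = 0) := by
    intro hnc
    set h := EuclideanDomain.gcd f g with hh
    have hh0 : h ≠ 0 := by
      intro h0
      exact hf0 (EuclideanDomain.gcd_eq_zero_iff.mp h0).1
    have hu : ¬ IsUnit h := fun u => hnc ((EuclideanDomain.gcd_isUnit_iff (x := f) (y := g)).mp u)
    have hdeg : 0 < h.natDegree :=
      natDegree_pos_iff_degree_pos.mpr (degree_pos_of_ne_zero_of_nonunit hh0 hu)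
    obtain ⟨f', hf'⟩ := EuclideanDomain.gcd_dvd_left f g
    obtain ⟨g', hg'⟩ := EuclideanDomain.gcd_dvd_right f g
    rw [← hh] at hf' hg'
    have hf'0 : f' ≠ 0 := fun e => hf0 (by rw [hf', e, mul_zero])
    have hg'0 : g' ≠ 0 := fun e => hg0 (by rw [hg', e, mul_zero])
    refine ⟨g', -f', hg'0, neg_ne_zero.mpr hf'0, ?_, ?_, ?_⟩
    · have := natDegree_mul hh0 hg'0
      rw [← hg'] at this
      omega
    · have := natDegree_mul hh0 hf'0
      rw [← hf'] at this
      rw [natDegree_neg]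
      omega
    · rw [hf', hg']
      ring
  constructor
  · exact fun h => lemB (lemC h)
  · intro hroot
    by_cases hcop : IsCoprime f g
    · exact absurd hroot (lemA hcop)
    · exact lemD hcop

/-- For polynomials of positive degree over a field, the resultant vanishes iff the two
polynomials have a common root in the algebraic closure. -/
theorem resultant_eq_zero_iff_common_root {K : Type*} [Field K] (f g : Polynomial K)
    (hf : 0 < f.natDegree) (hg : 0 < g.natDegree) :
    _root_.resultant f g = 0 ↔
      ∃ x : AlgebraicClosure K, aeval x f = 0 ∧ aeval x g = 0 := (resultant_eq_zero_iff_exists f g hf hg).trans (exists_comb_iff_common_root f g hf hg)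
end

section
/- Let R and S be commutative rings, φ : R → S a ring homomorphism, and f, g ∈ R[X] nonzero polynomials such that φ(leadingCoeff f) ≠ 0 and φ(leadingCoeff g) ≠ 0 (equivalently, the maps of f and g under φ have the same degrees as f and g). Then Res(map φ f, map φ g) = φ(Res(f, g)). -/
open Polynomial

/-- The resultant commutes with ring homomorphisms that do not kill the leading
coefficients. -/
theorem resultant_map {R S : Type*} [CommRing R] [CommRing S] (φ : R →+* S)
    (f g : Polynomial R) (hf : f ≠ 0) (hg : g ≠ 0)
    (hlf : φ f.leadingCoeff ≠ 0) (hlg : φ g.leadingCoeff ≠ 0) :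
    _root_.resultant (f.map φ) (g.map φ) = φ (_root_.resultant f g) := by
  have hdf : (f.map φ).natDegree = f.natDegree :=
    natDegree_map_of_leadingCoeff_ne_zero φ hlf
  have hdg : (g.map φ).natDegree = g.natDegree :=
    natDegree_map_of_leadingCoeff_ne_zero φ hlg
  have h : f.natDegree + g.natDegree = (f.map φ).natDegree + (g.map φ).natDegree := by
    rw [hdf, hdg]
  have hM : sylvesterMatrix (f.map φ) (g.map φ) =
      Matrix.reindex (finCongr h) (finCongr h) ((sylvesterMatrix f g).map φ) := by
    ext i j
    simp only [sylvesterMatrix, Matrix.reindex_apply, Matrix.submatrix_apply, Matrix.map_apply,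
      Matrix.of_apply, finCongr_symm, finCongr_apply, Fin.coe_cast, hdf, hdg, coeff_map]
    split_ifs <;> simp
  rw [_root_.resultant, _root_.resultant, hM, Matrix.det_reindex_self]
  exact (RingHom.map_det φ _).symm
end

section
/- Let p be a prime, m, n ≥ 1 integers, and f = x^n + Σ_{i=0}^{n−1} a_i(t)·x^i ∈ (F_p[t])[x], where a_0(t) ∈ F_p[t] has degree exactly m and a_i(t) has degree at most m − 1 for 1 ≤ i ≤ n − 1. Then g(t) := Res_x(f, X^p − X) ∈ F_p[t] is nonzero and has degree exactly m·p. -/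
open Polynomial

lemma myCoeffProd {K : Type*} [CommSemiring K] {ι : Type*} (s : Finset ι)
    (q : ι → Polynomial K) (d : ι → ℕ) (h : ∀ i ∈ s, (q i).degree ≤ (d i : WithBot ℕ)) :
    (∏ i ∈ s, q i).coeff (∑ i ∈ s, d i) = ∏ i ∈ s, (q i).coeff (d i) := by
  induction s using Finset.cons_induction with
  | empty => simp
  | cons a s ha ih =>
    rw [Finset.prod_cons, Finset.sum_cons, Finset.prod_cons,
      coeff_mul_add_eq_of_natDegree_le (natDegree_le_iff_degree_le.2 (h a (Finset.mem_cons_self a s)))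
        (le_trans (natDegree_prod_le _ _) (Finset.sum_le_sum fun i hi =>
          natDegree_le_iff_degree_le.2 (h i (Finset.mem_cons_of_mem hi)))),
      ih (fun i hi => h i (Finset.mem_cons_of_mem hi))]

lemma myDegreeDetLe {ι : Type*} [DecidableEq ι] [Fintype ι] {K : Type*} [CommRing K]
    (M : Matrix ι ι (Polynomial K)) (d : ι → ℕ) (h : ∀ i j, (M i j).degree ≤ (d i : WithBot ℕ)) :
    M.det.degree ≤ ((∑ i, d i : ℕ) : WithBot ℕ) := by
  rw [Matrix.det_apply']
  refine le_trans (degree_sum_le _ _) ?_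
  rw [Finset.sup_le_iff]
  intro σ _
  refine le_trans (degree_mul_le _ _) ?_
  have h1 : degree (((Equiv.Perm.sign σ : ℤ) : Polynomial K)) ≤ 0 := degree_intCast_le _
  have h2 : degree (∏ i, M (σ i) i) ≤ ((∑ i, d i : ℕ) : WithBot ℕ) := by
    refine le_trans (degree_prod_le _ _) ?_
    have e1 : ((∑ i, d i : ℕ) : WithBot ℕ) = ∑ i, ((d i : ℕ) : WithBot ℕ) := by
      push_cast; rfl
    have e2 : ∑ i, ((d i : ℕ) : WithBot ℕ) = ∑ i, ((d (σ i) : ℕ) : WithBot ℕ) :=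
      (Equiv.sum_comp σ fun i => ((d i : ℕ) : WithBot ℕ)).symm
    rw [e1, e2]
    exact Finset.sum_le_sum fun i _ => h _ _
  calc degree _ + degree (∏ i, M (σ i) i) ≤ 0 + ((∑ i, d i : ℕ) : WithBot ℕ) := add_le_add h1 h2
    _ = _ := zero_add _

lemma myCoeffDet {ι : Type*} [DecidableEq ι] [Fintype ι] {K : Type*} [CommRing K]
    (M : Matrix ι ι (Polynomial K)) (d : ι → ℕ) (h : ∀ i j, (M i j).degree ≤ (d i : WithBot ℕ)) :
    M.det.coeff (∑ i, d i) = Matrix.det (Matrix.of fun i j => (M i j).coeff (d i)) := by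
  rw [Matrix.det_apply', Matrix.det_apply', finset_sum_coeff]
  refine Finset.sum_congr rfl fun σ _ => ?_
  rw [← zsmul_eq_mul, ← zsmul_eq_mul, Polynomial.coeff_smul]
  congr 1
  have : (∑ i, d i) = ∑ i, d (σ i) := (Equiv.sum_comp σ d).symm
  rw [this, myCoeffProd _ _ _ (fun i _ => h (σ i) i)]
  rfl

/-- The degree of the resultant `g(t) = Res_x(f, X^p − X)` is exactly `m·p`, when the
constant coefficient (in `x`) of `f` has degree exactly `m` and all other non-leading
coefficients have degree at most `m − 1`. -/
theorem resultant_frobenius_degree (p m n : ℕ) [Fact p.Prime] (hm : 1 ≤ m) (hn : 1 ≤ n)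
    (a : ℕ → Polynomial (ZMod p)) (f : Polynomial (Polynomial (ZMod p)))
    (hf : f = X ^ n + ∑ i ∈ Finset.range n, C (a i) * X ^ i)
    (h0 : (a 0).degree = (m : ℕ))
    (hi : ∀ i, 1 ≤ i → i ≤ n - 1 → (a i).degree ≤ ((m - 1 : ℕ) : WithBot ℕ)) :
    _root_.resultant f (X ^ p - X) ≠ 0 ∧
      (_root_.resultant f (X ^ p - X)).degree = ((m * p : ℕ) : WithBot ℕ) := by
  have hp : p.Prime := Fact.out
  have hp2 : 2 ≤ p := hp.two_le
  set g : Polynomial (Polynomial (ZMod p)) := X ^ p - X with hg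
  -- coefficients of f
  have hfc : ∀ c : ℕ, f.coeff c = (if c = n then 1 else 0) + (if c < n then a c else 0) := by
    intro c
    rw [hf, coeff_add, coeff_X_pow, finset_sum_coeff]
    congr 1
    simp_rw [coeff_C_mul, coeff_X_pow, mul_ite, mul_one, mul_zero]
    rw [Finset.sum_ite_eq]
    simp [Finset.mem_range]
  have hfn : f.coeff n = 1 := by rw [hfc]; simp
  have hflt : ∀ c, c < n → f.coeff c = a c := by
    intro c hc
    rw [hfc, if_neg (by omega), if_pos hc, zero_add]
  have hdf : f.degree = (n : ℕ) := by
    rw [hf]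
    rw [degree_add_eq_left_of_degree_lt, degree_X_pow]
    rw [degree_X_pow]
    refine lt_of_le_of_lt (degree_sum_le _ _) ?_
    rw [Finset.sup_lt_iff (by exact_mod_cast WithBot.bot_lt_coe n)]
    intro i hi'
    exact lt_of_le_of_lt (degree_C_mul_X_pow_le _ _)
      (by exact_mod_cast Finset.mem_range.1 hi')
  have hNf : f.natDegree = n := natDegree_eq_of_degree_eq_some hdf
  -- facts about g
  have hdg : g.degree = (p : ℕ) := by
    rw [hg, sub_eq_add_neg, degree_add_eq_left_of_degree_lt, degree_X_pow]
    rw [degree_X_pow, degree_neg, degree_X]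
    exact_mod_cast lt_of_lt_of_le one_lt_two hp2
  have hNg : g.natDegree = p := natDegree_eq_of_degree_eq_some hdg
  have hgc : ∀ c : ℕ, g.coeff c = (if c = p then 1 else 0) - (if c = 1 then 1 else 0) := by
    intro c
    rw [hg, coeff_sub, coeff_X_pow, coeff_X]
    congr 1
    simp [eq_comm]
  -- the reindexed Sylvester matrix
  have hsize : n + p = f.natDegree + g.natDegree := by rw [hNf, hNg]
  set e : Fin (n + p) ≃ Fin (f.natDegree + g.natDegree) := finCongr hsize with he
  set M : Matrix (Fin (n + p)) (Fin (n + p)) (Polynomial (ZMod p)) :=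
    (sylvesterMatrix f g).submatrix e e with hMdef
  have hdet : _root_.resultant f g = M.det := by
    unfold _root_.resultant
    exact (Matrix.det_submatrix_equiv_self e _).symm
  have hM : ∀ i j : Fin (n + p), M i j =
      if (i : ℕ) < p then
        (if (i : ℕ) ≤ (j : ℕ) ∧ (j : ℕ) ≤ (i : ℕ) + n then f.coeff (n + i - j) else 0)
      else
        (if (i : ℕ) - p ≤ (j : ℕ) ∧ (j : ℕ) ≤ (i : ℕ) then g.coeff ((i : ℕ) - j) else 0) := by
    intro i j
    have hei : ((e i : Fin (f.natDegree + g.natDegree)) : ℕ) = (i : ℕ) := rfl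
    have hej : ((e j : Fin (f.natDegree + g.natDegree)) : ℕ) = (j : ℕ) := rfl
    show sylvesterMatrix f g (e i) (e j) = _
    rw [sylvesterMatrix]
    simp only [Matrix.of_apply, hei, hej, hNf, hNg]
    by_cases hip : (i : ℕ) < p
    · rw [if_pos hip, if_pos hip]
    · rw [if_neg hip, if_neg hip]
      have hpi : p ≤ (i : ℕ) := le_of_not_gt hip
      have h1 : (i : ℕ) - p + p = (i : ℕ) := by omega
      have h2 : p + ((i : ℕ) - p) = (i : ℕ) := by omega
      rw [h1, h2]
  -- degree bounds
  have hdbound : ∀ i j : Fin (n + p),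
      (M i j).degree ≤ (((if (i : ℕ) < p then m else 0) : ℕ) : WithBot ℕ) := by
    intro i j
    rw [hM i j]
    by_cases hip : (i : ℕ) < p
    · rw [if_pos hip, if_pos hip]
      split_ifs with hcond
      · obtain ⟨hc1, hc2⟩ := hcond
        have h2 : n + (i : ℕ) - j ≤ n := by omega
        rcases eq_or_lt_of_le h2 with hceq | hlt
        · rw [hceq, hfn]
          exact le_trans degree_one_le (by exact_mod_cast Nat.zero_le m)
        · rw [hflt _ hlt]
          rcases Nat.eq_zero_or_pos (n + (i : ℕ) - j) with h0c | h1c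
          · rw [h0c, h0]
          · refine le_trans (hi _ h1c (by omega)) ?_
            exact_mod_cast Nat.sub_le m 1
      · simp
    · rw [if_neg hip, if_neg hip]
      split_ifs with hcond
      · rw [hgc]
        split_ifs <;> simp
      · simp
  -- the leading coefficient matrix N
  set L : ZMod p := (a 0).coeff m with hLdef
  have hL : L ≠ 0 := by
    rw [hLdef]
    exact coeff_ne_zero_of_eq_degree h0
  set N : Matrix (Fin (n + p)) (Fin (n + p)) (ZMod p) :=
    Matrix.of (fun i j => (M i j).coeff (if (i : ℕ) < p then m else 0)) with hNdef
  have hN : ∀ i j : Fin (n + p), N i j =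
      if (i : ℕ) < p then (if (j : ℕ) = (i : ℕ) + n then L else 0)
      else (if (j : ℕ) = (i : ℕ) - p then 1 else
        if (j : ℕ) = (i : ℕ) - 1 then -1 else 0) := by
    intro i j
    have hjlt : (j : ℕ) < n + p := j.isLt
    have hilt : (i : ℕ) < n + p := i.isLt
    show (M i j).coeff (if (i : ℕ) < p then m else 0) = _
    rw [hM i j]
    by_cases hip : (i : ℕ) < p
    · rw [if_pos hip, if_pos hip, if_pos hip]
      by_cases hj : (j : ℕ) = (i : ℕ) + n
      · rw [if_pos hj, if_pos ⟨by omega, by omega⟩]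
        have hc0 : n + (i : ℕ) - j = 0 := by omega
        rw [hc0, hflt 0 (by omega), hLdef]
      · rw [if_neg hj]
        split_ifs with hcond
        · obtain ⟨hc1, hc2⟩ := hcond
          have h1 : 1 ≤ n + (i : ℕ) - j := by omega
          have h2 : n + (i : ℕ) - j ≤ n := by omega
          rcases eq_or_lt_of_le h2 with hceq | hlt
          · rw [hceq, hfn, coeff_one, if_neg (by omega)]
          · rw [hflt _ hlt]
            refine coeff_eq_zero_of_degree_lt (lt_of_le_of_lt (hi _ h1 (by omega)) ?_)
            exact_mod_cast (by omega : m - 1 < m)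
        · simp
    · rw [if_neg hip, if_neg hip, if_neg hip]
      have hpi : p ≤ (i : ℕ) := le_of_not_gt hip
      by_cases hj1 : (j : ℕ) = (i : ℕ) - p
      · rw [if_pos hj1, if_pos ⟨by omega, by omega⟩, hgc]
        have hc : (i : ℕ) - j = p := by omega
        rw [hc, if_pos rfl, if_neg (by omega : ¬ p = 1)]
        simp
      · rw [if_neg hj1]
        by_cases hj2 : (j : ℕ) = (i : ℕ) - 1
        · rw [if_pos hj2, if_pos ⟨by omega, by omega⟩, hgc]
          have hc : (i : ℕ) - j = 1 := by omega
          rw [hc, if_neg (by omega : ¬ (1 : ℕ) = p), if_pos rfl]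
          simp
        · rw [if_neg hj2]
          split_ifs with hcond
          · obtain ⟨hc1, hc2⟩ := hcond
            rw [hgc, if_neg (by omega), if_neg (by omega)]
            simp
          · simp
  -- reindexing equivalences
  set rowE : Fin p ⊕ Fin n ≃ Fin (n + p) :=
    finSumFinEquiv.trans (finCongr (Nat.add_comm p n)) with hrowE
  set colE : Fin p ⊕ Fin n ≃ Fin (n + p) :=
    (Equiv.sumComm (Fin p) (Fin n)).trans finSumFinEquiv with hcolE
  have hrow1 : ∀ i : Fin p, ((rowE (Sum.inl i)) : ℕ) = (i : ℕ) := by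
    intro i; simp [hrowE]
  have hrow2 : ∀ k : Fin n, ((rowE (Sum.inr k)) : ℕ) = p + (k : ℕ) := by
    intro k; simp [hrowE]; omega
  have hcol1 : ∀ i : Fin p, ((colE (Sum.inl i)) : ℕ) = n + (i : ℕ) := by
    intro i; simp [hcolE]
  have hcol2 : ∀ k : Fin n, ((colE (Sum.inr k)) : ℕ) = (k : ℕ) := by
    intro k; simp [hcolE]
  -- sum of degree bounds
  have hsumd : (∑ i : Fin (n + p), (if (i : ℕ) < p then m else 0)) = m * p := by
    rw [← Equiv.sum_comp rowE (fun i : Fin (n + p) => if (i : ℕ) < p then m else 0),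
      Fintype.sum_sum_type]
    have e1 : ∀ i : Fin p,
        (if ((rowE (Sum.inl i) : Fin (n+p)) : ℕ) < p then m else 0) = m := by
      intro i; rw [hrow1, if_pos i.isLt]
    have e2 : ∀ k : Fin n,
        (if ((rowE (Sum.inr k) : Fin (n+p)) : ℕ) < p then m else 0) = 0 := by
      intro k; rw [hrow2, if_neg (by omega)]
    rw [Finset.sum_congr rfl (fun i _ => e1 i), Finset.sum_congr rfl (fun k _ => e2 k)]
    simp [mul_comm]
  have hcoeffdet : M.det.coeff (m * p) = N.det := by
    rw [← hsumd]
    exact myCoeffDet M _ hdbound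
  -- block structure of N
  have hB : N.submatrix rowE colE =
      Matrix.fromBlocks (Matrix.diagonal fun _ : Fin p => L) 0
        (Matrix.of fun (k : Fin n) (i : Fin p) => N (rowE (Sum.inr k)) (colE (Sum.inl i)))
        (Matrix.of fun (k j : Fin n) =>
          if (j : ℕ) = (k : ℕ) then 1 else if (j : ℕ) = (k : ℕ) + p - 1 then -1 else 0) := by
    ext x y
    rcases x with i | k <;> rcases y with i' | j
    · simp only [Matrix.submatrix_apply, Matrix.fromBlocks_apply₁₁, Matrix.diagonal_apply]
      rw [hN, if_pos (by rw [hrow1]; exact i.isLt), hcol1, hrow1]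
      refine if_congr ?_ rfl rfl
      rw [Fin.ext_iff]; omega
    · simp only [Matrix.submatrix_apply, Matrix.fromBlocks_apply₁₂, Matrix.zero_apply]
      rw [hN, if_pos (by rw [hrow1]; exact i.isLt), hcol2, hrow1]
      rw [if_neg (by have := j.isLt; omega)]
    · simp only [Matrix.submatrix_apply, Matrix.fromBlocks_apply₂₁, Matrix.of_apply]
    · simp only [Matrix.submatrix_apply, Matrix.fromBlocks_apply₂₂, Matrix.of_apply]
      rw [hN, if_neg (by rw [hrow2]; omega), hcol2, hrow2]
      rw [show p + (k : ℕ) - p = (k : ℕ) from by omega,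
        show p + (k : ℕ) - 1 = (k : ℕ) + p - 1 from by omega]
  have hT : Matrix.det (Matrix.of fun (k j : Fin n) =>
      if (j : ℕ) = (k : ℕ) then (1 : ZMod p) else
        if (j : ℕ) = (k : ℕ) + p - 1 then -1 else 0) = 1 := by
    rw [Matrix.det_of_upperTriangular]
    · refine Finset.prod_eq_one fun k _ => ?_
      simp
    · intro k j hjk
      have hjk' : (j : ℕ) < (k : ℕ) := hjk
      simp only [Matrix.of_apply]
      rw [if_neg (by omega), if_neg (by omega)]
  have hBdetval : (N.submatrix rowE colE).det = L ^ p := by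
    rw [hB, Matrix.det_fromBlocks_zero₁₂, hT, mul_one, Matrix.det_diagonal]
    simp
  -- N.det is nonzero
  have hNdet : N.det ≠ 0 := by
    intro hzero
    set π : Equiv.Perm (Fin (n + p)) := rowE.symm.trans colE with hπdef
    have hsub : N.submatrix rowE colE = (N.submatrix id π).submatrix rowE rowE := by
      ext x y
      simp only [Matrix.submatrix_apply, id_eq]
      congr 1
      rw [hπdef]
      simp
    have : (N.submatrix rowE colE).det = Equiv.Perm.sign π * N.det := by
      rw [hsub, Matrix.det_submatrix_equiv_self, Matrix.det_permute']
    rw [hBdetval, hzero, mul_zero] at this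
    exact pow_ne_zero p hL this
  have hMdetcoeff : M.det.coeff (m * p) ≠ 0 := by rw [hcoeffdet]; exact hNdet
  have hMne : M.det ≠ 0 := fun h => hMdetcoeff (by rw [h, coeff_zero])
  constructor
  · rw [hdet]; exact hMne
  · rw [hdet]
    refine le_antisymm ?_ (le_degree_of_ne_zero hMdetcoeff)
    exact hsumd ▸ myDegreeDetLe M _ hdbound
end

section
/- Let p be a prime and f ∈ (F_p[t])[x] a polynomial that is monic of positive degree in x, and set g := Res_x(f, X^p − X) ∈ F_p[t]. Then for every t₀ ∈ F_p: g(t₀) = 0 if and only if there exists x₀ ∈ F_p with f(t₀, x₀) = 0. -/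
open Polynomial

section AuxSection
open Finset

namespace ResAux

noncomputable def rowPoly {R : Type*} [CommRing R] (f g : Polynomial R) (i : ℕ) : Polynomial R :=
  if i < g.natDegree then f * X ^ (g.natDegree - 1 - i)
  else g * X ^ (f.natDegree - 1 - (i - g.natDegree))

lemma sylvester_entry {R : Type*} [CommRing R] (f g : Polynomial R)
    (i j : Fin (f.natDegree + g.natDegree)) :
    sylvesterMatrix f g i j
      = (rowPoly f g i).coeff (f.natDegree + g.natDegree - 1 - j) := by
  have hi := i.isLt
  have hj := j.isLt
  rcases lt_or_ge (i : ℕ) g.natDegree with h | h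
  · rw [rowPoly, if_pos h, sylvesterMatrix]
    simp only [Matrix.of_apply, if_pos h]
    rw [coeff_mul_X_pow']
    split_ifs with h1 h2 h2
    · congr 1; omega
    · exfalso; omega
    · refine (coeff_eq_zero_of_natDegree_lt ?_).symm
      omega
    · rfl
  · rw [rowPoly, if_neg (not_lt.mpr h), sylvesterMatrix]
    simp only [Matrix.of_apply, if_neg (not_lt.mpr h)]
    rw [coeff_mul_X_pow']
    split_ifs with h1 h2 h2
    · congr 1; omega
    · exfalso; omega
    · refine (coeff_eq_zero_of_natDegree_lt ?_).symm
      omega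
    · rfl

variable {K : Type*} [Field K]

/-- standard-form polynomial built from a coefficient function -/
noncomputable def mk (c : ℕ → K) (m : ℕ) : Polynomial K :=
  ∑ k ∈ Finset.range m, C (c k) * X ^ k

lemma coeff_mk (c : ℕ → K) (m j : ℕ) (hj : j < m) : (mk c m).coeff j = c j := by
  rw [mk, finset_sum_coeff]
  simp only [coeff_C_mul, coeff_X_pow, mul_ite, mul_one, mul_zero]
  simp [Finset.sum_ite_eq, hj]

lemma natDegree_mk_le (c : ℕ → K) (m : ℕ) : (mk c m).natDegree ≤ m - 1 := by
  refine natDegree_sum_le_of_forall_le _ _ fun k hk => ?_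
  exact (natDegree_C_mul_X_pow_le _ _).trans (by simp at hk; omega)

lemma mk_eq_self (a : Polynomial K) (m : ℕ) (h : a.natDegree < m) :
    mk (fun k => a.coeff k) m = a := by
  rw [mk]
  conv_rhs => rw [a.as_sum_range' m h]
  simp [C_mul_X_pow_eq_monomial]

lemma sum_reflect (w : ℕ → K) (m : ℕ) :
    ∑ i ∈ Finset.range m, C (w i) * X ^ (m - 1 - i)
      = mk (fun k => w (m - 1 - k)) m := by
  refine Eq.trans ?_ (Finset.sum_range_reflect (fun k => C (w (m - 1 - k)) * X ^ k) m)
  refine Finset.sum_congr rfl fun j hj => ?_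
  simp only [Finset.mem_range] at hj
  have : m - 1 - (m - 1 - j) = j := by omega
  rw [this]

/-- the `A` polynomial associated to a row vector -/
noncomputable def polyA (g : Polynomial K) (w : ℕ → K) : Polynomial K :=
  mk (fun k => w (g.natDegree - 1 - k)) g.natDegree

/-- the `B` polynomial associated to a row vector -/
noncomputable def polyB (f g : Polynomial K) (w : ℕ → K) : Polynomial K :=
  mk (fun k => w (g.natDegree + (f.natDegree - 1 - k))) f.natDegree

lemma sum_rowPoly (f g : Polynomial K) (w : ℕ → K) :
    ∑ i ∈ Finset.range (g.natDegree + f.natDegree), C (w i) * rowPoly f g i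
      = f * polyA g w + g * polyB f g w := by
  rw [Finset.sum_range_add]
  congr 1
  · rw [polyA, ← sum_reflect w g.natDegree, Finset.mul_sum]
    refine Finset.sum_congr rfl fun i hi => ?_
    simp only [Finset.mem_range] at hi
    rw [rowPoly, if_pos hi]; ring
  · rw [polyB, ← sum_reflect (fun j => w (g.natDegree + j)) f.natDegree, Finset.mul_sum]
    refine Finset.sum_congr rfl fun k hk => ?_
    simp only [Finset.mem_range] at hk
    rw [rowPoly, if_neg (by omega)]
    have : g.natDegree + k - g.natDegree = k := by omega
    rw [this]; ring

lemma vecMul_eq_zero_iff (f g : Polynomial K) (hn : 0 < f.natDegree) (w : ℕ → K) :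
    Matrix.vecMul (fun i : Fin (f.natDegree + g.natDegree) => w i) (sylvesterMatrix f g) = 0
      ↔ f * polyA g w + g * polyB f g w = 0 := by
  set n := f.natDegree with hnn
  set m := g.natDegree with hmm
  set h := f * polyA g w + g * polyB f g w with hh
  have hdeg : h.natDegree < n + m := by
    rw [hh]
    have h1 : (f * polyA g w).natDegree < n + m := by
      rcases eq_or_ne (polyA g w) 0 with h0 | h0
      · simp [h0]; omega
      · calc (f * polyA g w).natDegree ≤ n + (polyA g w).natDegree := natDegree_mul_le
          _ ≤ n + (m - 1) := by have := natDegree_mk_le (fun k => w (m - 1 - k)) m; exact Nat.add_le_add_left this n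
          _ < n + m := by
              rcases Nat.eq_zero_or_pos m with h0m | h0m
              · exfalso; apply h0; rw [polyA, ← hmm, h0m]; simp [mk]
              · omega
    have h2 : (g * polyB f g w).natDegree < n + m := by
      rcases eq_or_ne (g * polyB f g w) 0 with h0 | h0
      · simp [h0]; omega
      · have hb : polyB f g w ≠ 0 := fun hb => h0 (by rw [hb, mul_zero])
        calc (g * polyB f g w).natDegree ≤ m + (polyB f g w).natDegree :=
              natDegree_mul_le
          _ ≤ m + (n - 1) := Nat.add_le_add_left (natDegree_mk_le _ _) m
          _ < n + m := by omega
    calc h.natDegree ≤ max (f * polyA g w).natDegree (g * polyB f g w).natDegree := natDegree_add_le _ _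
      _ < n + m := max_lt h1 h2
  have key : ∀ j : Fin (n + m),
      Matrix.vecMul (fun i : Fin (n + m) => w i) (sylvesterMatrix f g) j
        = h.coeff (n + m - 1 - j) := by
    intro j
    rw [Matrix.vecMul, dotProduct]
    have : ∀ i : Fin (n + m), w i * sylvesterMatrix f g i j
        = (C (w i) * rowPoly f g i).coeff (n + m - 1 - j) := by
      intro i
      rw [sylvester_entry, coeff_C_mul]
    rw [Finset.sum_congr rfl fun i _ => this i, ← finset_sum_coeff]
    congr 1
    rw [Fin.sum_univ_eq_sum_range (fun i => C (w i) * rowPoly f g i) (n + m)]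
    rw [show n + m = m + n from Nat.add_comm n m, sum_rowPoly f g w, ← hh]
  constructor
  · intro hv
    ext k
    rcases lt_or_ge k (n + m) with hk | hk
    · have := key ⟨n + m - 1 - k, by omega⟩
      rw [hv] at this
      simp only [Pi.zero_apply] at this
      have harg : n + m - 1 - (n + m - 1 - k) = k := by omega
      rw [harg] at this
      rw [coeff_zero, ← this]
    · rw [coeff_zero]
      exact coeff_eq_zero_of_natDegree_lt (lt_of_lt_of_le hdeg hk)
  · intro h0
    funext j
    rw [key j, h0, coeff_zero, Pi.zero_apply]

end ResAux

namespace Dir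

variable {K : Type*} [Field K]

lemma resultant_eq_zero_of_common_root (f g : Polynomial K)
    (hf0 : f ≠ 0) (hg0 : g ≠ 0) (hn : 0 < f.natDegree)
    (x₀ : K) (hfx : f.IsRoot x₀) (hgx : g.IsRoot x₀) : _root_.resultant f g = 0 := by
  classical
  set n := f.natDegree with hnn
  set m := g.natDegree with hmm
  obtain ⟨f₁, hf₁⟩ := dvd_iff_isRoot.mpr hfx
  obtain ⟨g₁, hg₁⟩ := dvd_iff_isRoot.mpr hgx
  have hf₁0 : f₁ ≠ 0 := fun h => hf0 (by rw [hf₁, h, mul_zero])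
  have hg₁0 : g₁ ≠ 0 := fun h => hg0 (by rw [hg₁, h, mul_zero])
  have hdf : f₁.natDegree = n - 1 ∧ 0 < n := by
    have : n = 1 + f₁.natDegree := by
      rw [hnn, hf₁, natDegree_mul (X_sub_C_ne_zero x₀) hf₁0, natDegree_X_sub_C]
    omega
  have hdg : g₁.natDegree = m - 1 ∧ 0 < m := by
    have : m = 1 + g₁.natDegree := by
      rw [hmm, hg₁, natDegree_mul (X_sub_C_ne_zero x₀) hg₁0, natDegree_X_sub_C]
    omega
  set w : ℕ → K := fun i => if i < m then g₁.coeff (m - 1 - i)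
    else -(f₁.coeff (n - 1 - (i - m))) with hw
  have hA : ResAux.polyA g w = g₁ := by
    rw [ResAux.polyA, ← hmm]
    have : ∀ k, k < m → w (m - 1 - k) = g₁.coeff k := by
      intro k hk
      rw [hw]
      simp only
      rw [if_pos (by omega)]
      congr 1
      omega
    rw [show (ResAux.mk (fun k => w (m - 1 - k)) m) = ResAux.mk (fun k => g₁.coeff k) m from ?_]
    · exact ResAux.mk_eq_self g₁ m (by omega)
    · rw [ResAux.mk, ResAux.mk]
      refine Finset.sum_congr rfl fun k hk => ?_
      rw [this k (Finset.mem_range.mp hk)]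
  have hB : ResAux.polyB f g w = -f₁ := by
    rw [ResAux.polyB, ← hmm, ← hnn]
    have : ∀ k, k < n → w (m + (n - 1 - k)) = -(f₁.coeff k) := by
      intro k hk
      rw [hw]
      simp only
      rw [if_neg (by omega)]
      have h1 : m + (n - 1 - k) - m = n - 1 - k := by omega
      rw [h1]
      congr 2
      omega
    rw [show (ResAux.mk (fun k => w (m + (n - 1 - k))) n) = ResAux.mk (fun k => (-f₁).coeff k) n from ?_]
    · exact ResAux.mk_eq_self (-f₁) n (by rw [natDegree_neg]; omega)
    · rw [ResAux.mk, ResAux.mk]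
      refine Finset.sum_congr rfl fun k hk => ?_
      rw [this k (Finset.mem_range.mp hk), coeff_neg]
  have hzero : f * ResAux.polyA g w + g * ResAux.polyB f g w = 0 := by
    rw [hA, hB, hf₁, hg₁]; ring
  have hvne : (fun i : Fin (n + m) => w i) ≠ 0 := by
    intro hcontra
    have hk : g₁.coeff g₁.natDegree ≠ 0 := by
      rw [← leadingCoeff]; exact leadingCoeff_ne_zero.mpr hg₁0
    have hlt : m - 1 - g₁.natDegree < n + m := by omega
    have := congrFun hcontra ⟨m - 1 - g₁.natDegree, hlt⟩
    simp only [Pi.zero_apply] at this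
    apply hk
    rw [← this, hw]
    simp only
    rw [if_pos (by omega)]
    congr 1
    omega
  rw [_root_.resultant, ← Matrix.exists_vecMul_eq_zero_iff]
  exact ⟨_, hvne, (ResAux.vecMul_eq_zero_iff f g hn w).mpr hzero⟩

lemma not_isCoprime_of_resultant_eq_zero (f g : Polynomial K)
    (hf0 : f ≠ 0) (hn : 0 < f.natDegree)
    (hres : _root_.resultant f g = 0) : ¬ IsCoprime f g := by
  classical
  intro hcoprime
  set n := f.natDegree with hnn
  set m := g.natDegree with hmm
  obtain ⟨v, hvne, hvec⟩ := Matrix.exists_vecMul_eq_zero_iff.mpr hres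
  set w : ℕ → K := fun i => if hi : i < n + m then v ⟨i, hi⟩ else 0 with hw
  have hveq : (fun i : Fin (n + m) => w i) = v := by
    funext i
    rw [hw]
    simp only
    rw [dif_pos i.isLt]
  have hzero : f * ResAux.polyA g w + g * ResAux.polyB f g w = 0 := by
    rw [← ResAux.vecMul_eq_zero_iff f g hn w, hveq]
    exact hvec
  have hB : ResAux.polyB f g w = 0 := by
    by_contra hB0
    have hdvd : f ∣ g * ResAux.polyB f g w :=
      ⟨-(ResAux.polyA g w), by linear_combination hzero⟩
    have hdvdB : f ∣ ResAux.polyB f g w := hcoprime.dvd_of_dvd_mul_left hdvd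
    have h1 : n ≤ (ResAux.polyB f g w).natDegree := natDegree_le_of_dvd hdvdB hB0
    have h2 : (ResAux.polyB f g w).natDegree ≤ n - 1 := ResAux.natDegree_mk_le _ _
    omega
  have hA : ResAux.polyA g w = 0 := by
    rw [hB, mul_zero, add_zero, mul_eq_zero] at hzero
    exact hzero.resolve_left hf0
  apply hvne
  funext i
  have hi := i.isLt
  have hvi : v i = w (i : ℕ) := (congrFun hveq i).symm
  rw [Pi.zero_apply, hvi]
  rcases lt_or_ge (i : ℕ) m with him | him
  · have := ResAux.coeff_mk (fun k => w (m - 1 - k)) m (m - 1 - (i : ℕ)) (by omega)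
    rw [← ResAux.polyA, hA, coeff_zero] at this
    rw [← this.symm]
    congr 1
    omega
  · have hj : (i : ℕ) - m < n := by omega
    have := ResAux.coeff_mk (fun k => w (m + (n - 1 - k))) n (n - 1 - ((i : ℕ) - m)) (by omega)
    rw [← ResAux.polyB, hB, coeff_zero] at this
    rw [← this.symm]
    congr 1
    omega

end Dir

namespace Fin2

lemma resultant_map {R S : Type*} [CommRing R] [CommRing S] (φ : R →+* S)
    (f g : Polynomial R)
    (hf : (f.map φ).natDegree = f.natDegree) (hg : (g.map φ).natDegree = g.natDegree) :
    _root_.resultant (f.map φ) (g.map φ) = φ (_root_.resultant f g) := by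
  have h : (f.map φ).natDegree + (g.map φ).natDegree = f.natDegree + g.natDegree := by
    rw [hf, hg]
  rw [_root_.resultant, _root_.resultant, RingHom.map_det]
  have hmat : sylvesterMatrix (f.map φ) (g.map φ)
      = ((sylvesterMatrix f g).map φ).submatrix (finCongr h) (finCongr h) := by
    ext i j
    simp only [sylvesterMatrix, Matrix.submatrix_apply, Matrix.map_apply, Matrix.of_apply,
      finCongr_apply, Fin.coe_cast, hf, hg]
    split_ifs <;> simp [coeff_map]
  rw [hmat]
  exact Matrix.det_submatrix_equiv_self (finCongr h) ((sylvesterMatrix f g).map φ)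

end Fin2

section Main

variable (p : ℕ) [Fact p.Prime]

theorem resultant_frobenius_eval_eq_zero_iff' (f : Polynomial (Polynomial (ZMod p)))
    (hmonic : f.Monic) (hdeg : 0 < f.natDegree) (t₀ : ZMod p) :
    (_root_.resultant f (X ^ p - X)).eval t₀ = 0 ↔
      ∃ x₀ : ZMod p, (f.eval (C x₀)).eval t₀ = 0 := by
  classical
  have hp1 : 1 < p := (Fact.out : p.Prime).one_lt
  set φ := evalRingHom t₀ with hφ
  set fK := f.map φ with hfK
  set gR : Polynomial (Polynomial (ZMod p)) := X ^ p - X with hgR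
  set gK : Polynomial (ZMod p) := X ^ p - X with hgK
  have hgmap : gR.map φ = gK := by
    rw [hgR, hgK, Polynomial.map_sub, Polynomial.map_pow, Polynomial.map_X]
  have hfdeg : fK.natDegree = f.natDegree := hmonic.natDegree_map φ
  have hgRdeg : gR.natDegree = p := by
    rw [hgR, natDegree_sub_eq_left_of_natDegree_lt, natDegree_X_pow]
    rw [natDegree_X_pow, natDegree_X]; omega
  have hgKdeg : gK.natDegree = p := FiniteField.X_pow_card_sub_X_natDegree_eq _ hp1
  have hres : _root_.resultant fK gK = (_root_.resultant f gR).eval t₀ := by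
    rw [← hgmap]
    exact Fin2.resultant_map φ f gR (by rw [hfdeg]) (by rw [hgmap, hgKdeg, hgRdeg])
  have hfK0 : fK ≠ 0 := (hmonic.map φ).ne_zero
  have hfKdeg : 0 < fK.natDegree := by omega
  have hgK0 : gK ≠ 0 := FiniteField.X_pow_card_sub_X_ne_zero _ hp1
  have heval : ∀ x₀ : ZMod p, fK.eval x₀ = (f.eval (C x₀)).eval t₀ := by
    intro x₀
    rw [hfK, eval_map]
    have h1 : (f.eval (C x₀)).eval t₀ = φ (f.eval (C x₀)) := rfl
    rw [h1]
    rw [eval, hom_eval₂]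
    congr 1
    simp [hφ]
  constructor
  · intro h0
    have hres0 : _root_.resultant fK gK = 0 := by rw [hres, h0]
    have : ∃ x₀ : ZMod p, fK.IsRoot x₀ := by
      by_contra hno
      push_neg at hno
      apply Dir.not_isCoprime_of_resultant_eq_zero fK gK hfK0 hfKdeg hres0
      -- IsCoprime fK gK
      have hsplit : gK = ∏ c : ZMod p, (X - C c) := by
        have hmon : gK.Monic := by
          rw [hgK]
          exact monic_X_pow_sub (by rw [degree_X]; exact_mod_cast hp1)
        have hroots : gK.roots = Finset.univ.val := by
          have := FiniteField.roots_X_pow_card_sub_X (ZMod p)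
          rwa [ZMod.card] at this
        have hcard : Multiset.card gK.roots = gK.natDegree := by
          rw [hroots, hgKdeg]
          simp [ZMod.card]
        have := prod_multiset_X_sub_C_of_monic_of_roots_card_eq hmon hcard
        rw [hroots] at this
        rw [← this, Finset.prod_eq_multiset_prod]
      rw [hsplit]
      refine IsCoprime.prod_right fun c _ => ?_
      exact (((irreducible_X_sub_C c).coprime_iff_not_dvd).mpr
        (fun hd => hno c (dvd_iff_isRoot.mp hd))).symm
    obtain ⟨x₀, hx₀⟩ := this
    exact ⟨x₀, by rw [← heval x₀]; exact hx₀⟩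
  · rintro ⟨x₀, hx₀⟩
    have hroot : fK.IsRoot x₀ := by rw [IsRoot, heval x₀]; exact hx₀
    have hgroot : gK.IsRoot x₀ := by
      rw [hgK, IsRoot]
      simp [ZMod.pow_card]
    have := Dir.resultant_eq_zero_of_common_root fK gK hfK0 hgK0 hfKdeg x₀ hroot hgroot
    rw [hres] at this
    exact this

end Main

end AuxSection

/-- For monic `f ∈ (F_p[t])[x]` of positive degree and `g = Res_x(f, X^p − X)`:
`g(t₀) = 0` iff `f(t₀, x₀) = 0` for some `x₀ ∈ F_p`. -/
theorem resultant_frobenius_eval_eq_zero_iff (p : ℕ) [Fact p.Prime]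
    (f : Polynomial (Polynomial (ZMod p))) (hmonic : f.Monic) (hdeg : 0 < f.natDegree)
    (t₀ : ZMod p) :
    (_root_.resultant f (X ^ p - X)).eval t₀ = 0 ↔
      ∃ x₀ : ZMod p, (f.eval (C x₀)).eval t₀ = 0 := by
  exact resultant_frobenius_eval_eq_zero_iff' p f hmonic hdeg t₀
end

section
/- Let p be a prime, d ≥ 1 an integer, and h ∈ F_p[T] a nonzero squarefree polynomial. Then the degree of gcd(h, T^{p^d} − T) in F_p[T] equals the number of elements a of the finite field GF(p^d) of order p^d with h(a) = 0 (where h is viewed in GF(p^d)[T] via the inclusion F_p ⊆ GF(p^d)). -/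
open Polynomial

/-- For a nonzero squarefree polynomial `h ∈ F_p[T]`, the degree of
`gcd (h, T^(p^d) − T)` equals the number of roots of `h` in the Galois field
of order `p^d`. -/
theorem natDegree_gcd_frobenius_eq_card_roots (p d : ℕ) [Fact p.Prime] (hd : 1 ≤ d)
    (h : Polynomial (ZMod p)) (hne : h ≠ 0) (hsq : Squarefree h) :
    (EuclideanDomain.gcd h (X ^ p ^ d - X)).natDegree =
      {a : GaloisField p d | aeval a h = 0}.ncard := by
  classical
  haveI : Fintype (GaloisField p d) := Fintype.ofFinite _
  have hp1 : 1 < p := (Fact.out : p.Prime).one_lt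
  have hcard : Fintype.card (GaloisField p d) = p ^ d := by
    have := GaloisField.card p d (by omega)
    rwa [Nat.card_eq_fintype_card] at this
  set g := EuclideanDomain.gcd h (X ^ p ^ d - X) with hg
  have hgne : g ≠ 0 := fun h0 => hne (EuclideanDomain.gcd_eq_zero_iff.mp h0).1
  set φ := algebraMap (ZMod p) (GaloisField p d) with hφ
  set G := g.map φ with hG
  have hGne : G ≠ 0 := (Polynomial.map_ne_zero_iff φ.injective).mpr hgne
  have hfne : (X ^ p ^ d - X : (GaloisField p d)[X]) ≠ 0 :=
    FiniteField.X_pow_card_pow_sub_X_ne_zero _ (by omega) hp1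
  have hgdvd := EuclideanDomain.gcd_dvd_right h (X ^ p ^ d - X)
  rw [← hg] at hgdvd
  have hGdvd : G ∣ (X ^ p ^ d - X : (GaloisField p d)[X]) := by
    have h2 := Polynomial.map_dvd φ hgdvd
    simpa using h2
  have hroots : (X ^ p ^ d - X : (GaloisField p d)[X]).roots = Finset.univ.val := by
    have := FiniteField.roots_X_pow_card_sub_X (GaloisField p d)
    rwa [hcard] at this
  have hGroots_le : G.roots ≤ (X ^ p ^ d - X : (GaloisField p d)[X]).roots :=
    roots.le_of_dvd hfne hGdvd
  have hnodup : G.roots.Nodup := by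
    rw [hroots] at hGroots_le
    exact Multiset.nodup_of_le hGroots_le Finset.univ.nodup
  have hsplits : Splits G := by
    have hs : Splits ((X ^ p ^ d - X : (ZMod p)[X]).map φ) := by
      have := FiniteField.splits_X_pow_card_sub_X p (K := GaloisField p d)
      rwa [hcard] at this
    exact hs.of_dvd (Polynomial.map_ne_zero
      (FiniteField.X_pow_card_pow_sub_X_ne_zero (ZMod p) (by omega) hp1)) (Polynomial.map_dvd φ hgdvd)
  have hdeg : G.natDegree = Multiset.card G.roots := (splits_iff_card_roots.mp hsplits).symm
  have hmem : ∀ a : GaloisField p d, a ∈ G.roots ↔ aeval a h = 0 := by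
    intro a
    rw [mem_roots hGne, IsRoot.def, eval_map, ← aeval_def]
    constructor
    · intro h0
      obtain ⟨u, hu⟩ := EuclideanDomain.gcd_dvd_left h (X ^ p ^ d - X)
      rw [← hg] at hu
      rw [hu, map_mul, h0, zero_mul]
    · intro h0
      have heq := EuclideanDomain.gcd_eq_gcd_ab h (X ^ p ^ d - X)
      rw [← hg] at heq
      have hx : aeval a (X ^ p ^ d - X : (ZMod p)[X]) = 0 := by
        rw [map_sub, map_pow, aeval_X, sub_eq_zero]
        have := FiniteField.pow_card a
        rwa [hcard] at this
      rw [heq, map_add, map_mul, map_mul, h0, hx, zero_mul, zero_mul, add_zero]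
  have hset : {a : GaloisField p d | aeval a h = 0} = ↑G.roots.toFinset := by
    ext a
    simp [← hmem a]
  have hnd : g.natDegree = G.natDegree := (natDegree_map_eq_of_injective φ.injective g).symm
  rw [hnd, hdeg, hset, Set.ncard_coe_finset, Multiset.toFinset_card_of_nodup hnodup]
end

section
/- Let K be a field and let f, g be nonzero polynomials in x over the polynomial ring K[t], of degrees d_f ≥ 1 and d_g ≥ 1 in x, and set D := d_f + d_g. If every coefficient of f and of g (each an element of K[t]) has at most L nonzero terms (i.e., its support has cardinality at most L), then the resultant Res_x(f, g) ∈ K[t] has at most D!·L^D nonzero terms. -/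
open Polynomial

lemma card_support_prod_le {K : Type*} [CommRing K] {ι : Type*} (s : Finset ι)
    (p : ι → Polynomial K) :
    (∏ i ∈ s, p i).support.card ≤ ∏ i ∈ s, (p i).support.card := by
  classical
  induction s using Finset.induction_on with
  | empty =>
    simpa using (Polynomial.card_support_C_mul_X_pow_le_one (R := K) (c := 1) (n := 0))
  | @insert a t hn ih =>
    rw [Finset.prod_insert hn, Finset.prod_insert hn]
    exact le_trans Polynomial.card_support_mul_le
      (Nat.mul_le_mul_left _ ih)

lemma card_support_sum_le {K : Type*} [CommRing K] {ι : Type*} (s : Finset ι)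
    (p : ι → Polynomial K) (L : ℕ) (h : ∀ i ∈ s, (p i).support.card ≤ L) :
    (∑ i ∈ s, p i).support.card ≤ s.card * L := by
  classical
  induction s using Finset.induction_on with
  | empty => simp
  | @insert a t hn ih =>
    rw [Finset.sum_insert hn, Finset.card_insert_of_notMem hn, add_mul, one_mul]
    calc ((p a + ∑ i ∈ t, p i).support).card
        ≤ ((p a).support ∪ (∑ i ∈ t, p i).support).card :=
          Finset.card_le_card (Polynomial.support_add)
      _ ≤ (p a).support.card + (∑ i ∈ t, p i).support.card := Finset.card_union_le _ _
      _ ≤ L + t.card * L := by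
          exact Nat.add_le_add (h a (Finset.mem_insert_self a t))
            (ih fun i hi => h i (Finset.mem_insert_of_mem hi))
      _ = t.card * L + L := by ring

/-- Sparsity bound for the resultant: if every coefficient of `f` and of `g` has at most
`L` nonzero terms, then with `D = d_f + d_g` the resultant has at most `D! · L^D`
nonzero terms. -/
theorem card_support_resultant_le {K : Type*} [Field K] (f g : Polynomial (Polynomial K))
    (L : ℕ) (hf : f ≠ 0) (hg : g ≠ 0) (hdf : 1 ≤ f.natDegree) (hdg : 1 ≤ g.natDegree)
    (hfc : ∀ i, (f.coeff i).support.card ≤ L)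
    (hgc : ∀ i, (g.coeff i).support.card ≤ L) :
    (_root_.resultant f g).support.card ≤
      Nat.factorial (f.natDegree + g.natDegree) * L ^ (f.natDegree + g.natDegree) := by
  classical
  set D := f.natDegree + g.natDegree with hD
  have hentry : ∀ i j, ((sylvesterMatrix f g) i j).support.card ≤ L := by
    intro i j
    unfold sylvesterMatrix
    simp only [Matrix.of_apply]
    split_ifs <;> simp [hfc, hgc]
  rw [_root_.resultant, Matrix.det_apply]
  have hterm : ∀ σ : Equiv.Perm (Fin D),
      ((Equiv.Perm.sign σ : ℤ) • ∏ i, (sylvesterMatrix f g) (σ i) i).support.card ≤ L ^ D := by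
    intro σ
    calc ((Equiv.Perm.sign σ : ℤ) • ∏ i, (sylvesterMatrix f g) (σ i) i).support.card
        ≤ (∏ i, (sylvesterMatrix f g) (σ i) i).support.card :=
          Finset.card_le_card (Polynomial.support_smul _ _)
      _ ≤ ∏ _i : Fin D, L := le_trans (card_support_prod_le _ _)
          (Finset.prod_le_prod (fun _ _ => Nat.zero_le _) fun i _ => hentry _ _)
      _ = L ^ D := by simp
  calc (∑ σ : Equiv.Perm (Fin D),
        (Equiv.Perm.sign σ : ℤ) • ∏ i, (sylvesterMatrix f g) (σ i) i).support.card
      ≤ (Finset.univ : Finset (Equiv.Perm (Fin D))).card * L ^ D :=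
        card_support_sum_le _ _ _ fun σ _ => hterm σ
    _ = Nat.factorial D * L ^ D := by
        rw [Finset.card_univ, Fintype.card_perm, Fintype.card_fin]
end
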